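/- Let H be a subgroup of a group A, let φ : H → A be a group monomorphism, and let G = A∗_φ be the HNN extension with stable letter t, with A regarded as a subgroup of G. Let X be an A-set, and let x, y ∈ X be points in different A-orbits such that the A-stabilizer of x is H and the A-stabilizer of y is φ(H). Let Z be the φ-coalescence of X with respect to (x,y), with quotient G-map ρ : G×_A X → Z, and set z = ρ(ι(y)). Then: (1) the G-stabilizer G_z equals φ(H); and (2) the A-equivariant map ȷ : X → Z given by the composition of ι : X → G×_A X with ρ is injective. -/

import Mathlib

/-! ### The induced `G`-set `G ×_A S` along a homomorphism `A →* G` -/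

/-- The relation defining `G ×_A S` along `ι : A →* G`: `(g · ι a, s) ~ (g, a • s)`. -/
def IndRelH {A G : Type*} [Group A] [Group G] (ι : A →* G) (S : Type*) [MulAction A S] :
    G × S → G × S → Prop :=
  fun p q => ∃ a : A, p.1 = q.1 * ι a ∧ q.2 = a • p.2

/-- The induced `G`-set `G ×_A S` along `ι : A →* G`. -/
def IndSetH {A G : Type*} [Group A] [Group G] (ι : A →* G) (S : Type*) [MulAction A S] :
    Type _ :=
  Quot (IndRelH ι S)

/-- The class of a pair `(g, s)` in `G ×_A S`. -/
def IndSetH.mk {A G : Type*} [Group A] [Group G] (ι : A →* G) (S : Type*) [MulAction A S]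
    (p : G × S) : IndSetH ι S :=
  Quot.mk _ p

instance {A G : Type*} [Group A] [Group G] (ι : A →* G) (S : Type*) [MulAction A S] :
    SMul G (IndSetH ι S) :=
  ⟨fun g => Quot.map (fun p => (g * p.1, p.2)) (by
    rintro p q ⟨a, h1, h2⟩
    exact ⟨a, by dsimp only; rw [h1, mul_assoc], h2⟩)⟩

/-- `G` acts on `G ×_A S` by left multiplication on the first factor. -/
instance {A G : Type*} [Group A] [Group G] (ι : A →* G) (S : Type*) [MulAction A S] :
    MulAction G (IndSetH ι S) where
  one_smul := by
    rintro ⟨p⟩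
    show IndSetH.mk ι S (1 * p.1, p.2) = IndSetH.mk ι S p
    rw [one_mul]
  mul_smul g h := by
    rintro ⟨p⟩
    show IndSetH.mk ι S (g * h * p.1, p.2) = IndSetH.mk ι S (g * (h * p.1), p.2)
    rw [mul_assoc]

/-! ### The HNN extension `A∗_φ` of `A` along a monomorphism `φ : H → A` -/

section HNN

variable {A : Type*} [Group A] (H : Subgroup A) (φ : ↥H →* A) (hφ : Function.Injective φ)

/-- The HNN extension `A∗_φ = ⟨A, t ∣ t h t⁻¹ = φ(h) for h ∈ H⟩` of `A` along the
monomorphism `φ : H → A`. -/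
noncomputable abbrev HNNGroup : Type _ :=
  HNNExtension A H φ.range (MonoidHom.ofInjective hφ)

/-! ### The `φ`-coalescence -/

variable (X : Type*) [MulAction A X]

/-- The identifications defining the `φ`-coalescence of `X` with respect to `(x, y)`:
for every `g ∈ G = A∗_φ`, the point `g t • ι x` is glued to `g • ι y` in `G ×_A X`. -/
def CoalRel (x y : X) :
    IndSetH (HNNExtension.of : A →* HNNGroup H φ hφ) X →
    IndSetH (HNNExtension.of : A →* HNNGroup H φ hφ) X → Prop :=
  fun u v => ∃ g : HNNGroup H φ hφ,
    u = IndSetH.mk _ X (g * HNNExtension.t, x) ∧ v = IndSetH.mk _ X (g, y)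

/-- The `φ`-coalescence of the `A`-set `X` with respect to `(x, y)`: the quotient of the
induced `G`-set `G ×_A X` by the relation generated by `g t • ι x ~ g • ι y`. -/
def CoalSet (x y : X) : Type _ :=
  Quot (CoalRel H φ hφ X x y)

/-- The quotient `G`-map `ρ : G ×_A X → Z`. -/
def CoalSet.rho (x y : X)
    (u : IndSetH (HNNExtension.of : A →* HNNGroup H φ hφ) X) : CoalSet H φ hφ X x y :=
  Quot.mk _ u

noncomputable instance (x y : X) : SMul (HNNGroup H φ hφ) (CoalSet H φ hφ X x y) :=
  ⟨fun g => Quot.map (fun u => g • u) (by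
    rintro u v ⟨h, rfl, rfl⟩
    refine ⟨g * h, ?_, rfl⟩
    show IndSetH.mk _ X (g * (h * HNNExtension.t), x) =
      IndSetH.mk _ X (g * h * HNNExtension.t, x)
    rw [mul_assoc])⟩

/-- The group `G = A∗_φ` acts on the `φ`-coalescence. -/
noncomputable instance (x y : X) : MulAction (HNNGroup H φ hφ) (CoalSet H φ hφ X x y) where
  one_smul := by
    rintro ⟨u⟩
    show CoalSet.rho H φ hφ X x y ((1 : HNNGroup H φ hφ) • u) = CoalSet.rho H φ hφ X x y u
    rw [one_smul]
  mul_smul g h := by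
    rintro ⟨u⟩
    show CoalSet.rho H φ hφ X x y ((g * h) • u) = CoalSet.rho H φ hφ X x y (g • h • u)
    rw [mul_smul]

/-- The canonical `A`-map `ȷ : X → Z`, the composition of `ι : X → G ×_A X` with `ρ`. -/
noncomputable def CoalSet.incl (x y : X) (s : X) : CoalSet H φ hφ X x y :=
  CoalSet.rho H φ hφ X x y (IndSetH.mk _ X (1, s))

/-- The distinguished point `z = ρ (ι y)` of the `φ`-coalescence. -/
noncomputable def CoalSet.basePt (x y : X) : CoalSet H φ hφ X x y :=
  CoalSet.incl H φ hφ X x y y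

end HNN


/-! ### Auxiliary lemmas for the proof -/

section AuxProof

theorem indRelH_equivalence {A G : Type*} [Group A] [Group G] (ι : A →* G)
    (S : Type*) [MulAction A S] : Equivalence (IndRelH ι S) where
  refl p := ⟨1, by simp⟩
  symm := by
    rintro p q ⟨a, h1, h2⟩
    exact ⟨a⁻¹, by rw [h1]; simp, by rw [h2]; simp⟩
  trans := by
    rintro p q r ⟨a, h1, h2⟩ ⟨b, h3, h4⟩
    exact ⟨b * a, by rw [h1, h3, map_mul, mul_assoc], by rw [h4, h2, mul_smul]⟩

theorem indSetH_mk_eq_iff {A G : Type*} [Group A] [Group G] (ι : A →* G)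
    (S : Type*) [MulAction A S] (p q : G × S) :
    IndSetH.mk ι S p = IndSetH.mk ι S q ↔ IndRelH ι S p q := by
  show Quot.mk (IndRelH ι S) p = (Quot.mk (IndRelH ι S) q : Quot (IndRelH ι S)) ↔ _
  rw [Quot.eq]
  exact (indRelH_equivalence ι S).eqvGen_iff

section HNNAux

variable {A : Type*} [Group A] (H : Subgroup A) (φ : ↥H →* A) (hφ : Function.Injective φ)

/-- Conjugation relation in the HNN extension: `of h * t⁻¹ = t⁻¹ * of (φ h)`. -/
theorem hnn_of_mul_inv_t (h : ↥H) :
    (HNNExtension.of (h : A) : HNNGroup H φ hφ) * HNNExtension.t⁻¹ =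
      HNNExtension.t⁻¹ * HNNExtension.of (φ h) := by
  have := HNNExtension.of_mul_inv_t (φ := MonoidHom.ofInjective hφ) h
  rwa [MonoidHom.ofInjective_apply] at this

/-- The degree homomorphism `A∗_φ →* Multiplicative ℤ` killing `A`, sending `t ↦ 1`. -/
noncomputable def hnnDeg : HNNGroup H φ hφ →* Multiplicative ℤ :=
  HNNExtension.lift 1 (Multiplicative.ofAdd 1) (by intro a; simp)

theorem hnn_no_mix (a b : A) :
    (HNNExtension.of a : HNNGroup H φ hφ) * HNNExtension.t⁻¹ ≠ HNNExtension.of b := by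
  intro hcon
  have := congrArg (hnnDeg H φ hφ) hcon
  simp only [map_mul, map_inv, hnnDeg, HNNExtension.lift_of, HNNExtension.lift_t,
    MonoidHom.one_apply, one_mul] at this
  exact absurd (congrArg Multiplicative.toAdd this) (by simp)

variable (X : Type*) [MulAction A X] (x y : X)

open Classical in
/-- The retraction implementing the coalescence gluing on representatives. -/
noncomputable def coalRetr : HNNGroup H φ hφ × X → HNNGroup H φ hφ × X :=
  fun p =>
    if hs : p.2 ∈ MulAction.orbit A x then
      (p.1 * HNNExtension.of (MulAction.mem_orbit_iff.mp hs).choose * HNNExtension.t⁻¹, y)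
    else p

theorem coalRetr_spec_out (p : HNNGroup H φ hφ × X) (hs : p.2 ∉ MulAction.orbit A x) :
    coalRetr H φ hφ X x y p = p := dif_neg hs

theorem coalRetr_spec_in (g : HNNGroup H φ hφ) (s : X) (hs : s ∈ MulAction.orbit A x) :
    ∃ a : A, a • x = s ∧ coalRetr H φ hφ X x y (g, s) =
      (g * HNNExtension.of a * HNNExtension.t⁻¹, y) := by
  refine ⟨(MulAction.mem_orbit_iff.mp hs).choose,
    (MulAction.mem_orbit_iff.mp hs).choose_spec, ?_⟩
  exact dif_pos hs

theorem coalRetr_rel (hsx : MulAction.stabilizer A x = H)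
    (hsy : MulAction.stabilizer A y = φ.range) {p q : HNNGroup H φ hφ × X}
    (hpq : IndRelH (HNNExtension.of : A →* HNNGroup H φ hφ) X p q) :
    IndRelH (HNNExtension.of : A →* HNNGroup H φ hφ) X
      (coalRetr H φ hφ X x y p) (coalRetr H φ hφ X x y q) := by
  obtain ⟨b, h1, h2⟩ := hpq
  by_cases hp : p.2 ∈ MulAction.orbit A x
  · have hq : q.2 ∈ MulAction.orbit A x := by
      obtain ⟨a, ha⟩ := MulAction.mem_orbit_iff.mp hp
      exact MulAction.mem_orbit_iff.mpr ⟨b * a, by rw [mul_smul, ha, ← h2]⟩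
    obtain ⟨a, ha, hrp⟩ := coalRetr_spec_in H φ hφ X x y p.1 p.2 hp
    obtain ⟨a', ha', hrq⟩ := coalRetr_spec_in H φ hφ X x y q.1 q.2 hq
    have hmemH : a'⁻¹ * b * a ∈ H := by
      rw [← hsx]
      rw [MulAction.mem_stabilizer_iff]
      rw [mul_assoc, mul_smul, mul_smul, ha, ← h2, ← ha', inv_smul_smul]
    have hstaby : φ ⟨a'⁻¹ * b * a, hmemH⟩ ∈ MulAction.stabilizer A y := by
      rw [hsy]; exact ⟨_, rfl⟩
    rw [show p = (p.1, p.2) from rfl] at hrp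
    rw [show q = (q.1, q.2) from rfl] at hrq
    rw [hrp, hrq]
    refine ⟨φ ⟨a'⁻¹ * b * a, hmemH⟩, ?_, (MulAction.mem_stabilizer_iff.mp hstaby).symm⟩
    show p.1 * HNNExtension.of a * HNNExtension.t⁻¹ =
      q.1 * HNNExtension.of a' * HNNExtension.t⁻¹ * HNNExtension.of (φ ⟨a'⁻¹ * b * a, hmemH⟩)
    rw [mul_assoc (q.1 * HNNExtension.of a'), ← hnn_of_mul_inv_t H φ hφ ⟨a'⁻¹ * b * a, hmemH⟩,
      h1]
    show q.1 * HNNExtension.of b * HNNExtension.of a * HNNExtension.t⁻¹ =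
      q.1 * HNNExtension.of a' * (HNNExtension.of (a'⁻¹ * b * a) * HNNExtension.t⁻¹)
    rw [map_mul, map_mul, map_inv]
    group
  · have hq : q.2 ∉ MulAction.orbit A x := by
      intro hq
      apply hp
      obtain ⟨a, ha⟩ := MulAction.mem_orbit_iff.mp hq
      exact MulAction.mem_orbit_iff.mpr ⟨b⁻¹ * a, by rw [mul_smul, ha, h2, inv_smul_smul]⟩
    rw [coalRetr_spec_out H φ hφ X x y p hp, coalRetr_spec_out H φ hφ X x y q hq]
    exact ⟨b, h1, h2⟩

/-- `coalRetr` descends to the induced set. -/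
noncomputable def coalRetrBar (hsx : MulAction.stabilizer A x = H)
    (hsy : MulAction.stabilizer A y = φ.range) :
    IndSetH (HNNExtension.of : A →* HNNGroup H φ hφ) X →
      IndSetH (HNNExtension.of : A →* HNNGroup H φ hφ) X :=
  Quot.map (coalRetr H φ hφ X x y)
    (fun _ _ h => coalRetr_rel H φ hφ X x y hsx hsy h)

theorem coalRetrBar_mk (hsx : MulAction.stabilizer A x = H)
    (hsy : MulAction.stabilizer A y = φ.range) (p : HNNGroup H φ hφ × X) :
    coalRetrBar H φ hφ X x y hsx hsy (IndSetH.mk _ X p) =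
      IndSetH.mk _ X (coalRetr H φ hφ X x y p) := rfl

theorem coalRetrBar_coalRel (hsx : MulAction.stabilizer A x = H)
    (hsy : MulAction.stabilizer A y = φ.range) (horb : y ∉ MulAction.orbit A x)
    {u v : IndSetH (HNNExtension.of : A →* HNNGroup H φ hφ) X}
    (huv : CoalRel H φ hφ X x y u v) :
    coalRetrBar H φ hφ X x y hsx hsy u = coalRetrBar H φ hφ X x y hsx hsy v := by
  obtain ⟨g, rfl, rfl⟩ := huv
  rw [coalRetrBar_mk, coalRetrBar_mk]
  obtain ⟨a, ha, hr⟩ := coalRetr_spec_in H φ hφ X x y (g * HNNExtension.t) x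
    (MulAction.mem_orbit_self x)
  have haH : a ∈ H := by rw [← hsx]; exact MulAction.mem_stabilizer_iff.mpr ha
  rw [hr, coalRetr_spec_out H φ hφ X x y (g, y) horb]
  rw [indSetH_mk_eq_iff]
  have hconj : (HNNExtension.t : HNNGroup H φ hφ) * HNNExtension.of a * HNNExtension.t⁻¹ =
      HNNExtension.of (φ ⟨a, haH⟩) := by
    have := HNNExtension.equiv_eq_conj (φ := MonoidHom.ofInjective hφ) ⟨a, haH⟩
    rw [MonoidHom.ofInjective_apply] at this
    exact this.symm
  refine ⟨φ ⟨a, haH⟩, ?_, ?_⟩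
  · show g * HNNExtension.t * HNNExtension.of a * HNNExtension.t⁻¹ =
      g * HNNExtension.of (φ ⟨a, haH⟩)
    rw [mul_assoc g, mul_assoc g, hconj]
  · show y = φ ⟨a, haH⟩ • y
    have : φ ⟨a, haH⟩ ∈ MulAction.stabilizer A y := by rw [hsy]; exact ⟨_, rfl⟩
    exact (MulAction.mem_stabilizer_iff.mp this).symm

theorem rho_coalRetr (p : HNNGroup H φ hφ × X) :
    CoalSet.rho H φ hφ X x y (IndSetH.mk _ X p) =
      CoalSet.rho H φ hφ X x y (IndSetH.mk _ X (coalRetr H φ hφ X x y p)) := by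
  by_cases hp : p.2 ∈ MulAction.orbit A x
  · obtain ⟨a, ha, hr⟩ := coalRetr_spec_in H φ hφ X x y p.1 p.2 hp
    rw [show p = (p.1, p.2) from rfl] at hr
    rw [hr]
    have h1 : IndSetH.mk (HNNExtension.of : A →* HNNGroup H φ hφ) X (p.1, p.2) =
        IndSetH.mk _ X (p.1 * HNNExtension.of a, x) := by
      rw [indSetH_mk_eq_iff]
      exact ⟨a⁻¹, by rw [map_inv]; group, by rw [← ha]; simp⟩
    rw [h1]
    have h2 : IndSetH.mk (HNNExtension.of : A →* HNNGroup H φ hφ) X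
        (p.1 * HNNExtension.of a, x) =
        IndSetH.mk _ X ((p.1 * HNNExtension.of a * HNNExtension.t⁻¹) * HNNExtension.t, x) := by
      rw [indSetH_mk_eq_iff]
      exact ⟨1, by simp, by simp⟩
    rw [h2]
    exact Quot.sound ⟨p.1 * HNNExtension.of a * HNNExtension.t⁻¹, rfl, rfl⟩
  · rw [coalRetr_spec_out H φ hφ X x y p hp]

theorem rho_eq_iff (hsx : MulAction.stabilizer A x = H)
    (hsy : MulAction.stabilizer A y = φ.range) (horb : y ∉ MulAction.orbit A x) (p q : HNNGroup H φ hφ × X) :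
    CoalSet.rho H φ hφ X x y (IndSetH.mk _ X p) =
      CoalSet.rho H φ hφ X x y (IndSetH.mk _ X q) ↔
    IndSetH.mk (HNNExtension.of : A →* HNNGroup H φ hφ) X (coalRetr H φ hφ X x y p) =
      IndSetH.mk _ X (coalRetr H φ hφ X x y q) := by
  constructor
  · intro h
    have := congrArg (Quot.lift (coalRetrBar H φ hφ X x y hsx hsy)
      (fun _ _ huv => coalRetrBar_coalRel H φ hφ X x y hsx hsy horb huv)) h
    simpa only [CoalSet.rho, Quot.lift_mk, coalRetrBar_mk] using this
  · intro h
    rw [rho_coalRetr H φ hφ X x y p, rho_coalRetr H φ hφ X x y q, h]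

end HNNAux

end AuxProof

/-- Let `H ≤ A`, `φ : H → A` a monomorphism, `G = A∗_φ` the HNN
extension with stable letter `t`.  Let `X` be an `A`-set and `x, y ∈ X` points in
different `A`-orbits with `A_x = H` and `A_y = φ(H)`.  Let `Z` be the `φ`-coalescence of
`X` w.r.t. `(x, y)` and `z = ρ(ι y)`.  Then (1) the `G`-stabilizer of `z` is `φ(H)`, and
(2) the `A`-map `ȷ : X → Z` is injective. -/
theorem coalescence_stabilizer_and_incl_injective
    {A : Type*} [Group A] (H : Subgroup A) (φ : ↥H →* A) (hφ : Function.Injective φ)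
    (X : Type*) [MulAction A X] (x y : X)
    (horb : y ∉ MulAction.orbit A x)
    (hsx : MulAction.stabilizer A x = H)
    (hsy : MulAction.stabilizer A y = φ.range) :
    MulAction.stabilizer (HNNGroup H φ hφ) (CoalSet.basePt H φ hφ X x y) =
      φ.range.map (HNNExtension.of : A →* HNNGroup H φ hφ) ∧
    Function.Injective (CoalSet.incl H φ hφ X x y) := by
  constructor
  · ext g
    simp only [MulAction.mem_stabilizer_iff, Subgroup.mem_map]
    constructor
    · intro hg
      have h := (rho_eq_iff H φ hφ X x y hsx hsy horb (g * 1, y) (1, y)).mp hg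
      rw [coalRetr_spec_out H φ hφ X x y (g * 1, y) horb,
        coalRetr_spec_out H φ hφ X x y (1, y) horb, indSetH_mk_eq_iff] at h
      obtain ⟨a, h1, h2⟩ := h
      have haR : a ∈ φ.range := by
        rw [← hsy]; exact MulAction.mem_stabilizer_iff.mpr h2.symm
      exact ⟨a, haR, by simpa using h1.symm⟩
    · rintro ⟨a, haR, rfl⟩
      refine (rho_eq_iff H φ hφ X x y hsx hsy horb
        (HNNExtension.of a * 1, y) (1, y)).mpr ?_
      rw [coalRetr_spec_out H φ hφ X x y (HNNExtension.of a * 1, y) horb,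
        coalRetr_spec_out H φ hφ X x y (1, y) horb, indSetH_mk_eq_iff]
      refine ⟨a, by simp, ?_⟩
      rw [← hsy] at haR
      exact (MulAction.mem_stabilizer_iff.mp haR).symm
  · intro s s' hss
    have h := (rho_eq_iff H φ hφ X x y hsx hsy horb (1, s) (1, s')).mp hss
    by_cases hs : s ∈ MulAction.orbit A x <;> by_cases hs' : s' ∈ MulAction.orbit A x
    · obtain ⟨a, ha, hr⟩ := coalRetr_spec_in H φ hφ X x y 1 s hs
      obtain ⟨a', ha', hr'⟩ := coalRetr_spec_in H φ hφ X x y 1 s' hs'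
      rw [hr, hr', indSetH_mk_eq_iff] at h
      obtain ⟨c, h1, h2⟩ := h
      have hcr : c ∈ φ.range := by
        rw [← hsy]; exact MulAction.mem_stabilizer_iff.mpr h2.symm
      obtain ⟨hh, rfl⟩ := hcr
      rw [one_mul, one_mul, mul_assoc, ← hnn_of_mul_inv_t H φ hφ hh, ← mul_assoc,
        ← map_mul] at h1
      have ha2 : a = a' * (hh : A) := HNNExtension.of_injective (φ := MonoidHom.ofInjective hφ) (mul_right_cancel h1)
      rw [← ha, ← ha', ha2, mul_smul]
      congr 1
      have hhx : (hh : A) ∈ MulAction.stabilizer A x := by rw [hsx]; exact hh.2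
      rw [MulAction.mem_stabilizer_iff.mp hhx]
    · obtain ⟨a, ha, hr⟩ := coalRetr_spec_in H φ hφ X x y 1 s hs
      rw [hr, coalRetr_spec_out H φ hφ X x y (1, s') hs', indSetH_mk_eq_iff] at h
      obtain ⟨c, h1, -⟩ := h
      rw [one_mul, one_mul] at h1
      exact absurd h1 (hnn_no_mix H φ hφ a c)
    · obtain ⟨a', ha', hr'⟩ := coalRetr_spec_in H φ hφ X x y 1 s' hs'
      rw [hr', coalRetr_spec_out H φ hφ X x y (1, s) hs, indSetH_mk_eq_iff] at h
      obtain ⟨c, h1, -⟩ := h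
      rw [one_mul] at h1
      have h1' : (HNNExtension.of a' : HNNGroup H φ hφ) * HNNExtension.t⁻¹ = HNNExtension.of c⁻¹ := by
        rw [map_inv]
        exact eq_inv_of_mul_eq_one_left h1.symm
      exact absurd h1' (hnn_no_mix H φ hφ a' c⁻¹)
    · rw [coalRetr_spec_out H φ hφ X x y (1, s) hs,
        coalRetr_spec_out H φ hφ X x y (1, s') hs', indSetH_mk_eq_iff] at h
      obtain ⟨c, h1, h2⟩ := h
      have hc1 : c = 1 := HNNExtension.of_injective (φ := MonoidHom.ofInjective hφ) (by rw [map_one]; simpa using h1.symm)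
      rw [hc1, one_smul] at h2
      exact h2.symm
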